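/- Let V be a unitary corepresentation of a compact quantum group Q on a finite-dimensional Hilbert space ℂ^{d_π} ⊗ ℂ^{m} of the form V = U_π ⊗ 1 (multiple of the irreducible π), and let R be a positive invertible operator on ℂ^{d_π} ⊗ ℂ^m commuting with V. Define χ(a) := Tr(aR). Then (χ ⊗ h)(ad_V(a)) = χ(a) for all a ∈ B(ℂ^{d_π} ⊗ ℂ^m) if and only if R = F_π ⊗ T for some T ∈ B(ℂ^m), where F_π is the canonical positive matrix of π satisfying h(q^π_{ij} q^{π*}_{kl}) = δ_{ik}F_π(j,l)/M_π. -/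

import Mathlib

open scoped TensorProduct ComplexOrder

noncomputable section

namespace CocycleTwist

variable (A : Type) [Ring A] [StarRing A] [Algebra ℂ A]
variable (d m : ℕ)

/-- The adjoint coaction `ad_V(a) = V (a ⊗ 1) V^*` of the corepresentation
`V(e_i ⊗ f_j) = ∑_k e_k ⊗ f_j ⊗ q_{ki}` on matrices, written entrywise:
`(ad_V a)_{(k,j),(u,t)} = ∑_{i,s} a_{(i,j),(s,t)} • (q_{ki} (q_{us})^*)`. -/
def adVmat (q : Fin d → Fin d → A) (a : Matrix (Fin d × Fin m) (Fin d × Fin m) ℂ) :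
    Matrix (Fin d × Fin m) (Fin d × Fin m) A :=
  fun x y => ∑ i : Fin d, ∑ s : Fin d,
    a (i, x.2) (s, y.2) • (q x.1 i * star (q y.1 s))

/-- The corepresentation `V` as a matrix over `A`. -/
def Vmat (q : Fin d → Fin d → A) : Matrix (Fin d × Fin m) (Fin d × Fin m) A :=
  fun x y => if x.2 = y.2 then q x.1 y.1 else 0

/-- The `R`-twisted functional `χ(a) = Tr(aR)` evaluated, after applying the Haar state `h` to
the `A`-valued entries, on a matrix over `A`. -/
def chiH (h : A →ₗ[ℂ] ℂ) (R : Matrix (Fin d × Fin m) (Fin d × Fin m) ℂ)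
    (X : Matrix (Fin d × Fin m) (Fin d × Fin m) A) : ℂ :=
  h (∑ p : Fin d × Fin m, ∑ p' : Fin d × Fin m, R p' p • X p p')

/-- `χ(a) = Tr(aR)`. -/
def chi (R : Matrix (Fin d × Fin m) (Fin d × Fin m) ℂ)
    (a : Matrix (Fin d × Fin m) (Fin d × Fin m) ℂ) : ℂ :=
  ∑ p : Fin d × Fin m, ∑ p' : Fin d × Fin m, R p' p * a p p'


private lemma diagPos {n : Type*} [Fintype n] [DecidableEq n] {M : Matrix n n ℂ} (hM : M.PosDef)
    (p : n) : 0 < M p p := by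
  have hne : (Pi.single p (1:ℂ) : n → ℂ) ≠ 0 := by
    intro hc
    have := congrFun hc p
    simp at this
  have := hM.dotProduct_mulVec_pos hne
  simpa [dotProduct, Matrix.mulVec_single, Pi.single_apply, apply_ite] using this

/-- for a multiple `V = U_π ⊗ 1` of an irreducible unitary corepresentation `π` and
a positive invertible `R` commuting with `V`, the adjoint coaction `ad_V` preserves the
`R`-twisted functional `χ(a) = Tr(aR)` (with respect to the Haar state `h`) if and only if
`R = F_π ⊗ T` for some `T`. -/
theorem twisted_volume_preserved_iff (h : A →ₗ[ℂ] ℂ) (q : Fin d → Fin d → A)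
    (F : Matrix (Fin d) (Fin d) ℂ) (Mπ : ℝ) (hMπ : 0 < Mπ)
    (hF : F.PosDef) (hFtr : F.trace = (Mπ : ℂ) ∧ F⁻¹.trace = (Mπ : ℂ))
    (hq : ∀ i j k l : Fin d,
      h (q i j * star (q k l)) = if i = k then F j l / (Mπ : ℂ) else 0)
    (R : Matrix (Fin d × Fin m) (Fin d × Fin m) ℂ) (hR : R.PosDef)
    (hRV : R.map (algebraMap ℂ A) * Vmat A d m q = Vmat A d m q * R.map (algebraMap ℂ A)) :
    (∀ a : Matrix (Fin d × Fin m) (Fin d × Fin m) ℂ,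
      chiH A d m h R (adVmat A d m q a) = chi d m R a) ↔
    ∃ T : Matrix (Fin m) (Fin m) ℂ,
      ∀ (i j : Fin d) (k l : Fin m), R (i, k) (j, l) = F i j * T k l := by
  classical
  have hM0 : (Mπ:ℂ) ≠ 0 := by
    simpa using (Complex.ofReal_ne_zero.mpr hMπ.ne')
  have hFd : ∀ v : Fin d, F v v ≠ 0 := fun v => (diagPos hF v).ne'
  -- the commutation relation, turned scalar by pairing against `star (q w v)` under `h`
  have key : ∀ (x1 w y1 : Fin d) (x2 y2 : Fin m) (v : Fin d),
      R (x1,x2) (w,y2) * (F y1 v / Mπ)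
        = ∑ z1 : Fin d, (if x1 = w then R (z1,x2) (y1,y2) * (F z1 v / Mπ) else 0) := by
    intro x1 w y1 x2 y2 v
    have E : (R.map (algebraMap ℂ A) * Vmat A d m q) (x1,x2) (y1,y2)
        = (Vmat A d m q * R.map (algebraMap ℂ A)) (x1,x2) (y1,y2) := by rw [hRV]
    rw [Matrix.mul_apply, Matrix.mul_apply] at E
    have E2 := congrArg (fun t => h (t * star (q w v))) E
    simp only [Vmat, Matrix.map_apply, Finset.sum_mul, map_sum, ite_mul, zero_mul,
      mul_ite, mul_zero, mul_assoc, ← Algebra.smul_def, smul_mul_assoc, mul_smul_comm,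
      map_smul, smul_eq_mul, apply_ite h, map_zero, hq] at E2
    rw [Fintype.sum_prod_type, Fintype.sum_prod_type] at E2
    simp only [Finset.sum_ite_eq', Finset.sum_ite_eq, Finset.mem_univ, if_true] at E2
    simpa using E2
  have hzero : ∀ (i j : Fin d) (k l : Fin m), i ≠ j → R (i,k) (j,l) = 0 := by
    intro i j k l hij
    have h2 : R (i,k) (j,l) * (F i i / Mπ) = 0 := by
      rw [key i j i k l i]
      simp [if_neg hij]
    rcases mul_eq_zero.mp h2 with h3 | h3
    · exact h3
    · exact absurd h3 (div_ne_zero (hFd i) hM0)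
  have hdiag : ∀ (i j : Fin d) (k l : Fin m), R (i,k) (i,l) = R (j,k) (j,l) := by
    intro i j k l
    have h1 := key i i j k l j
    simp only [eq_self_iff_true, if_true] at h1
    have h2 : (∑ z1 : Fin d, R (z1,k) (j,l) * (F z1 j / Mπ))
        = R (j,k) (j,l) * (F j j / Mπ) := by
      rw [Finset.sum_eq_single j]
      · intro b _ hb
        rw [hzero b j k l hb, zero_mul]
      · intro hb
        exact absurd (Finset.mem_univ j) hb
    rw [h2] at h1
    exact mul_right_cancel₀ (div_ne_zero (hFd j) hM0) h1
  -- the value of chiH on adVmat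
  have hchiH : ∀ a : Matrix (Fin d × Fin m) (Fin d × Fin m) ℂ,
      chiH A d m h R (adVmat A d m q a)
        = ∑ p : Fin d × Fin m, ∑ p' : Fin d × Fin m, ∑ i : Fin d, ∑ s : Fin d,
            R p' p * (a (i, p.2) (s, p'.2) * (if p.1 = p'.1 then F i s / (Mπ:ℂ) else 0)) := by
    intro a
    unfold chiH adVmat
    simp only [Finset.smul_sum, map_sum, map_smul, smul_smul, smul_eq_mul, hq, mul_ite,
      mul_zero, mul_assoc]
  by_cases hd : d = 0
  · subst hd
    constructor
    · intro _
      exact ⟨0, fun i => i.elim0⟩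
    · intro _ a
      simp [chiH, chi, Finset.univ_eq_empty]
  by_cases hm : m = 0
  · subst hm
    constructor
    · intro _
      exact ⟨0, fun i j k => k.elim0⟩
    · intro _ a
      simp [chiH, chi, Finset.univ_eq_empty]
  have hd' : 0 < d := Nat.pos_of_ne_zero hd
  have hm' : 0 < m := Nat.pos_of_ne_zero hm
  set i0 : Fin d := ⟨0, hd'⟩ with hi0
  set k0 : Fin m := ⟨0, hm'⟩ with hk0
  have hr0 : R (i0, k0) (i0, k0) ≠ 0 := (diagPos hR (i0, k0)).ne'
  have hdc : (d : ℂ) ≠ 0 := Nat.cast_ne_zero.mpr hd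
  constructor
  · intro hL
    -- pointwise condition from matrix units
    have hpt : ∀ (i s : Fin d) (j t : Fin m),
        (∑ p1 : Fin d, R (p1, t) (p1, j)) * (F i s / Mπ) = R (s, t) (i, j) := by
      intro i s j t
      have h1 := hL (Matrix.of fun p p' : Fin d × Fin m =>
        if p = (i,j) ∧ p' = (s,t) then (1:ℂ) else 0)
      rw [hchiH] at h1
      simp only [Matrix.of_apply, chi, Prod.mk.injEq, ite_and, ite_mul, one_mul, zero_mul,
        mul_ite, mul_zero, mul_one, Finset.sum_ite_eq, Finset.sum_ite_eq', Finset.mem_univ,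
        if_true, Fintype.sum_prod_type, Finset.sum_ite_irrel, Finset.sum_const_zero] at h1
      rw [← h1, Finset.sum_mul]
    -- deduce F i s = if i = s then Mπ/d else 0
    have hFval : ∀ i s : Fin d, F i s = if i = s then (Mπ:ℂ) / d else 0 := by
      intro i s
      have h1 := hpt i s k0 k0
      have h2 : (∑ p1 : Fin d, R (p1, k0) (p1, k0)) = (d:ℂ) * R (i0, k0) (i0, k0) := by
        rw [Finset.sum_congr rfl (fun p1 _ => hdiag p1 i0 k0 k0)]
        simp [Finset.sum_const, mul_comm]
      rw [h2] at h1
      by_cases his : i = s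
      · subst his
        rw [if_pos rfl]
        have h3 : R (i, k0) (i, k0) = R (i0, k0) (i0, k0) := hdiag i i0 k0 k0
        rw [h3] at h1
        have h4 : (d:ℂ) * R (i0, k0) (i0, k0) * (F i i / Mπ)
            = (d:ℂ) * R (i0, k0) (i0, k0) * (((Mπ:ℂ)/d) / Mπ) := by
          rw [h1]
          field_simp
        have h5 := mul_left_cancel₀ (mul_ne_zero hdc hr0) h4
        rwa [div_left_inj' hM0] at h5
      · rw [if_neg his]
        rw [hzero s i k0 k0 (fun hc => his hc.symm)] at h1
        rcases mul_eq_zero.mp h1 with h3 | h3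
        · exact absurd h3 (mul_ne_zero hdc hr0)
        · rcases div_eq_zero_iff.mp h3 with h4 | h4
          · exact h4
          · exact absurd h4 hM0
    exact ⟨fun k l => ((d:ℂ) / Mπ) * R (i0, k) (i0, l), by
      intro i j k l
      rw [hFval i j]
      by_cases hij : i = j
      · subst hij
        rw [if_pos rfl, hdiag i i0 k l]
        field_simp
      · rw [if_neg hij, hzero i j k l hij, zero_mul]⟩
  · rintro ⟨T, hT⟩
    have hTne : T k0 k0 ≠ 0 := by
      intro hc
      exact hr0 (by rw [hT i0 i0 k0 k0, hc, mul_zero])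
    have hdiagF : ∀ i : Fin d, F i i = R (i0,k0) (i0,k0) / T k0 k0 := by
      intro i
      have h1 : F i i * T k0 k0 = R (i0,k0) (i0,k0) := by
        rw [← hT i i k0 k0]
        exact hdiag i i0 k0 k0
      rw [eq_div_iff hTne]
      exact h1
    -- derive that F is scalar
    have hFval : ∀ i s : Fin d, F i s = if i = s then (Mπ:ℂ) / d else 0 := by
      have htr : (d:ℂ) * (R (i0,k0) (i0,k0) / T k0 k0) = Mπ := by
        calc (d:ℂ) * (R (i0,k0) (i0,k0) / T k0 k0) = ∑ i : Fin d, F i i := by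
              rw [Finset.sum_congr rfl fun i _ => hdiagF i]
              simp [Finset.sum_const, mul_comm]
          _ = (Mπ:ℂ) := by simpa [Matrix.trace, Matrix.diag] using hFtr.1
      intro i s
      by_cases his : i = s
      · subst his
        rw [if_pos rfl, hdiagF i, eq_div_iff hdc, mul_comm]
        exact htr
      · rw [if_neg his]
        have h1 : F i s * T k0 k0 = 0 := by
          rw [← hT i s k0 k0]
          exact hzero i s k0 k0 his
        exact (mul_eq_zero.mp h1).resolve_right hTne
    intro a
    rw [hchiH a]
    obtain ⟨T0, hT0⟩ : ∃ T0 : Fin m → Fin m → ℂ, ∀ k l, T0 k l = R (i0,k) (i0,l) :=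
      ⟨_, fun _ _ => rfl⟩
    have hRval : ∀ (i j : Fin d) (k l : Fin m),
        R (i,k) (j,l) = if i = j then T0 k l else 0 := by
      intro i j k l
      by_cases hij : i = j
      · subst hij
        rw [if_pos rfl, hT0]
        exact hdiag i i0 k l
      · rw [if_neg hij]
        exact hzero i j k l hij
    simp only [chi, Fintype.sum_prod_type]
    simp only [hRval, hFval]
    simp only [ite_mul, zero_mul, mul_ite, mul_zero, ite_div, zero_div,
      Finset.sum_ite_irrel, Finset.sum_const_zero, Finset.sum_ite_eq, Finset.sum_ite_eq',
      Finset.mem_univ, if_true]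
    rw [Finset.sum_const, Finset.card_univ, Fintype.card_fin, nsmul_eq_mul, Finset.mul_sum]
    conv_rhs => rw [Finset.sum_comm]
    refine Finset.sum_congr rfl fun y _ => ?_
    rw [Finset.mul_sum]
    conv_rhs => rw [Finset.sum_comm]
    refine Finset.sum_congr rfl fun z _ => ?_
    rw [Finset.mul_sum]
    refine Finset.sum_congr rfl fun w _ => ?_
    field_simp [hM0, hdc]


end CocycleTwist
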